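/- Let T be a homeomorphism of a compact metric space X, let g : X → ℂ be continuous and bounded, and let k ≥ 1. Suppose that for all x, y ∈ X and all sufficiently large distinct primes r, s, (1/N)∑_{n≤N} g((T^k)^{rn} x)·conj(g((T^k)^{sn} y)) → 0 as N → ∞ (with the threshold on r, s independent of x, y). Then for every x ∈ X and all sufficiently large distinct primes r, s, (1/N)∑_{n≤N} g(T^{rn} x)·conj(g(T^{sn} x)) → 0 as N → ∞. -/

import Mathlib

open Filter

lemma stmt16_sum_decomp (f : ℕ → ℂ) (k : ℕ) : ∀ M : ℕ,
    ∑ n ∈ Finset.range (k * M), f n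
      = ∑ j ∈ Finset.range k, ∑ m ∈ Finset.range M, f (k * m + j) := by
  intro M
  induction M with
  | zero => simp
  | succ M ih =>
      rw [Nat.mul_succ, Finset.sum_range_add, ih]
      simp [Finset.sum_range_succ, Finset.sum_add_distrib]

lemma stmt16_nat_div_tendsto {k : ℕ} (hk : 1 ≤ k) :
    Tendsto (fun N : ℕ => N / k) atTop atTop := by
  apply tendsto_atTop_atTop.2
  intro b
  exact ⟨b * k, fun n hn => (Nat.le_div_iff_mul_le (by omega)).2 hn⟩

lemma stmt16_avg_tendsto_of_blocks {f : ℕ → ℂ} {C : ℝ} (hb : ∀ n, ‖f n‖ ≤ C)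
    {k : ℕ} (hk : 1 ≤ k)
    (h : ∀ j < k, Tendsto (fun M : ℕ => (M : ℂ)⁻¹ * ∑ m ∈ Finset.range M, f (k * m + j))
      atTop (nhds 0)) :
    Tendsto (fun N : ℕ => (N : ℂ)⁻¹ * ∑ n ∈ Finset.range N, f n) atTop (nhds 0) := by
  have hC : 0 ≤ C := le_trans (norm_nonneg _) (hb 0)
  set S : ℕ → ℂ := fun M => (M : ℂ)⁻¹ * ∑ n ∈ Finset.range (k * M), f n with hS
  have hStend : Tendsto S atTop (nhds 0) := by
    have hfe : S = fun M : ℕ => ∑ j ∈ Finset.range k,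
        ((M : ℂ)⁻¹ * ∑ m ∈ Finset.range M, f (k * m + j)) := by
      funext M
      rw [hS]
      simp only [stmt16_sum_decomp f k M, Finset.mul_sum]
    rw [hfe]
    have := tendsto_finset_sum (Finset.range k)
      (fun j hj => h j (Finset.mem_range.mp hj))
    simpa using this
  apply squeeze_zero_norm (a := fun N : ℕ => ‖S (N / k)‖ + (C * k) / N)
  · intro N
    rcases Nat.eq_zero_or_pos N with h0 | h0
    · subst h0
      simp only [Nat.cast_zero, Finset.range_zero, Finset.sum_empty, mul_zero, norm_zero]
      positivity
    set M := N / k with hM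
    have hkM : k * M ≤ N := by rw [hM]; exact Nat.mul_div_le N k
    have hmod : N % k + k * M = N := by rw [hM]; exact Nat.mod_add_div N k
    have hmlt : N % k < k := Nat.mod_lt N (by omega)
    have hkM' : N - k * M < k := by omega
    have hsplit : ∑ n ∈ Finset.range N, f n
        = ∑ n ∈ Finset.range (k * M), f n + ∑ i ∈ Finset.range (N - k * M), f (k * M + i) := by
      rw [← Finset.sum_range_add]
      congr 2
      omega
    have hNpos : (0:ℝ) < N := by exact_mod_cast h0
    rw [hsplit, mul_add]
    refine le_trans (norm_add_le _ _) (add_le_add ?_ ?_)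
    · rw [hS]
      simp only [norm_mul]
      rcases Nat.eq_zero_or_pos M with hM0 | hM0
      · simp [hM0]
      · have hMN : (M:ℝ) ≤ N := by exact_mod_cast (hM ▸ Nat.div_le_self N k)
        have hMpos : (0:ℝ) < M := by exact_mod_cast hM0
        refine mul_le_mul_of_nonneg_right ?_ (norm_nonneg _)
        rw [norm_inv, norm_inv, Complex.norm_natCast, Complex.norm_natCast]
        exact inv_anti₀ hMpos hMN
    · rw [norm_mul, norm_inv, Complex.norm_natCast, div_eq_inv_mul]
      refine mul_le_mul_of_nonneg_left ?_ (by positivity)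
      calc ‖∑ i ∈ Finset.range (N - k * M), f (k * M + i)‖
          ≤ ∑ i ∈ Finset.range (N - k * M), ‖f (k * M + i)‖ := norm_sum_le _ _
        _ ≤ ∑ _i ∈ Finset.range (N - k * M), C := Finset.sum_le_sum fun i _ => hb _
        _ = (N - k * M : ℕ) * C := by simp [mul_comm]
        _ ≤ C * k := by
            rw [mul_comm ((N - k*M : ℕ) : ℝ)]
            exact mul_le_mul_of_nonneg_left (by exact_mod_cast hkM'.le) hC
  · have h1 : Tendsto (fun N : ℕ => ‖S (N / k)‖) atTop (nhds 0) := by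
      have := (hStend.comp (stmt16_nat_div_tendsto hk)).norm
      simpa using this
    have h2 := tendsto_const_div_atTop_nhds_zero_nat (C * k)
    simpa using h1.add h2

/-- If the two-point correlation averages of `g` along `T^k` vanish (uniformly in the
initial points, for all sufficiently large distinct primes `r, s`), then the
correlation averages of `g` along `T` itself also vanish for each point and all
sufficiently large distinct primes. -/
theorem stmt16 {X : Type*} [MetricSpace X] [CompactSpace X]
    (T : X ≃ₜ X) (g : C(X, ℂ)) (k : ℕ) (hk : 1 ≤ k)
    (hyp : ∃ R₀ : ℕ, ∀ r s : ℕ, Nat.Prime r → Nat.Prime s → r ≠ s →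
      R₀ ≤ r → R₀ ≤ s → ∀ x y : X,
      Tendsto (fun N : ℕ => (N : ℂ)⁻¹ * ∑ n ∈ Finset.range N,
          g ((⇑T)^[k * (r * n)] x) * (starRingEnd ℂ) (g ((⇑T)^[k * (s * n)] y)))
        atTop (nhds 0)) :
    ∃ R₁ : ℕ, ∀ r s : ℕ, Nat.Prime r → Nat.Prime s → r ≠ s →
      R₁ ≤ r → R₁ ≤ s → ∀ x : X,
      Tendsto (fun N : ℕ => (N : ℂ)⁻¹ * ∑ n ∈ Finset.range N,
          g ((⇑T)^[r * n] x) * (starRingEnd ℂ) (g ((⇑T)^[s * n] x)))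
        atTop (nhds 0) := by
  obtain ⟨R₀, hR⟩ := hyp
  refine ⟨R₀, fun r s hr hs hrs hr' hs' x => ?_⟩
  set f : ℕ → ℂ := fun n => g ((⇑T)^[r * n] x) * (starRingEnd ℂ) (g ((⇑T)^[s * n] x)) with hf
  have hb : ∀ n, ‖f n‖ ≤ ‖g‖ * ‖g‖ := by
    intro n
    rw [hf]
    simp only [norm_mul, RingHomIsometric.norm_map]
    exact mul_le_mul (g.norm_coe_le_norm _) (g.norm_coe_le_norm _) (norm_nonneg _)
      (norm_nonneg _)
  refine stmt16_avg_tendsto_of_blocks hb hk fun j hj => ?_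
  have key := hR r s hr hs hrs hr' hs' ((⇑T)^[r * j] x) ((⇑T)^[s * j] x)
  have heq : ∀ m : ℕ, f (k * m + j)
      = g ((⇑T)^[k * (r * m)] ((⇑T)^[r * j] x))
        * (starRingEnd ℂ) (g ((⇑T)^[k * (s * m)] ((⇑T)^[s * j] x))) := by
    intro m
    rw [hf]
    simp only [← Function.iterate_add_apply]
    congr 2 <;> ring
  simpa only [← heq] using key
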